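/- Let ℓ≥2 be an integer, ω∈ℝ, and let R:[a,π/2]→ℝ be twice continuously differentiable with R(a)=0. Then the following are equivalent: (I) −R″ + V_ℓR = ω²R on [a,π/2] and −2ω²R(π/2) + (ℓ(ℓ+1)(ℓ(ℓ+1)−2)/(6M))R′(π/2) + k²ℓ(ℓ+1)R(π/2) = 0; (II) for every smooth v:[a,π/2]→ℝ vanishing on a neighbourhood of a, ∫ₐ^{π/2}( R′v′ + V_ℓ R v ) dx + (6Mk²/(ℓ(ℓ+1)−2)) ∫ₐ^{π/2}( R′v + Rv′ ) dx = ω²( ∫ₐ^{π/2} R v dx + (12M/(ℓ(ℓ+1)(ℓ(ℓ+1)−2))) ∫ₐ^{π/2}( R′v + Rv′ ) dx ). -/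

import Mathlib

/- The truncated "Robin" Regge–Wheeler eigenvalue problem on [a, π/2]
   (tortoise coordinate, truncated at r = 3M). -/

noncomputable section

open Filter Topology Set

namespace RWradial

/-- `Δ(r) = r² + k²r⁴ − 2Mr`. -/
def Del (M k r : ℝ) : ℝ := r ^ 2 + k ^ 2 * r ^ 4 - 2 * M * r

/-- `R` (with derivative data `R'`, `R''`) is a twice continuously differentiable
solution of the truncated "Robin" Regge–Wheeler eigenvalue problem on `[a, π/2]`:
`−R″ + V R = ω²R`, `R(a) = 0`, and the higher order "Robin" condition at `π/2`. -/
def EVPsol (M k a : ℝ) (V : ℝ → ℝ) (ℓ : ℕ) (ω : ℝ) (R R' R'' : ℝ → ℝ) : Prop :=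
  (∀ x ∈ Set.Icc a (Real.pi / 2), HasDerivWithinAt R (R' x) (Set.Icc a (Real.pi / 2)) x) ∧
  (∀ x ∈ Set.Icc a (Real.pi / 2), HasDerivWithinAt R' (R'' x) (Set.Icc a (Real.pi / 2)) x) ∧
  ContinuousOn R'' (Set.Icc a (Real.pi / 2)) ∧
  (∀ x ∈ Set.Icc a (Real.pi / 2), -R'' x + V x * R x = ω ^ 2 * R x) ∧
  R a = 0 ∧
  (-2 * ω ^ 2 * R (Real.pi / 2)
    + ((ℓ : ℝ) * ((ℓ : ℝ) + 1) * ((ℓ : ℝ) * ((ℓ : ℝ) + 1) - 2) / (6 * M)) * R' (Real.pi / 2)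
    + k ^ 2 * ((ℓ : ℝ) * ((ℓ : ℝ) + 1)) * R (Real.pi / 2) = 0)

private lemma RW_ibp (a P : ℝ) (haP : a ≤ P) (g g' v : ℝ → ℝ)
    (hg : ∀ x ∈ Set.Icc a P, HasDerivWithinAt g (g' x) (Set.Icc a P) x)
    (hg'c : ContinuousOn g' (Set.Icc a P)) (hv : ContDiff ℝ (⊤ : ℕ∞) v) :
    (∫ x in a..P, (g' x * v x + g x * deriv v x)) = g P * v P - g a * v a := by
  have hgc : ContinuousOn g (Set.Icc a P) := fun x hx => (hg x hx).continuousWithinAt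
  have hvc : Continuous v := hv.continuous
  have hdvc : Continuous (deriv v) := hv.continuous_deriv (by exact_mod_cast le_top)
  have hvd : ∀ x : ℝ, HasDerivAt v (deriv v x) x :=
    fun x => (hv.differentiable (by simp) x).hasDerivAt
  exact intervalIntegral.integral_eq_sub_of_hasDeriv_right_of_le haP
    (hgc.mul hvc.continuousOn)
    (fun x hx => (((hg x (Set.Ioo_subset_Icc_self hx)).hasDerivAt
      (Icc_mem_nhds hx.1 hx.2)).mul (hvd x)).hasDerivWithinAt)
    (((hg'c.mul hvc.continuousOn).add
      (hgc.mul hdvc.continuousOn)).intervalIntegrable_of_Icc haP)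

/-- Fundamental lemma of the calculus of variations on `[a, P]`. -/
private lemma RW_fund (a P : ℝ) (ha : a < P) (f : ℝ → ℝ)
    (hfc : ContinuousOn f (Set.Icc a P))
    (h : ∀ v : ℝ → ℝ, ContDiff ℝ (⊤ : ℕ∞) v → (∀ᶠ x in 𝓝 a, v x = 0) → v P = 0 →
      (∫ x in a..P, f x * v x) = 0) :
    ∀ x ∈ Set.Icc a P, f x = 0 := by
  have haP : a ≤ P := ha.le
  have hioo : ∀ x₀ ∈ Set.Ioo a P, f x₀ = 0 := by
    intro x₀ hx₀
    by_contra hne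
    have hcf : ContinuousAt f x₀ := hfc.continuousAt (Icc_mem_nhds hx₀.1 hx₀.2)
    have hs2 : 0 < |f x₀| / 2 := by positivity
    obtain ⟨δ, hδpos, hδ⟩ := Metric.continuousAt_iff.mp hcf (|f x₀| / 2) hs2
    set r : ℝ := min δ (min ((x₀ - a) / 2) ((P - x₀) / 2)) with hrdef
    have hr0 : 0 < r :=
      lt_min hδpos (lt_min (by linarith [hx₀.1]) (by linarith [hx₀.2]))
    have hra : r ≤ (x₀ - a) / 2 := (min_le_right _ _).trans (min_le_left _ _)
    have hrP : r ≤ (P - x₀) / 2 := (min_le_right _ _).trans (min_le_right _ _)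
    have hrδ : r ≤ δ := min_le_left _ _
    obtain ⟨c, hcIn, hcOut⟩ : ∃ c : ContDiffBump x₀, c.rIn = r / 2 ∧ c.rOut = r :=
      ⟨⟨r / 2, r, by positivity, by linarith⟩, rfl, rfl⟩
    have hvnear : ∀ᶠ x in 𝓝 a, c x = 0 := by
      filter_upwards [Metric.ball_mem_nhds a
        (show (0:ℝ) < (x₀ - a) / 2 by linarith [hx₀.1])] with y hy
      apply c.zero_of_le_dist
      rw [Metric.mem_ball, Real.dist_eq] at hy
      rw [Real.dist_eq]
      have h1 := abs_lt.mp hy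
      have h2 : x₀ - y ≤ |y - x₀| := by
        rw [abs_sub_comm]; exact le_abs_self _
      rw [hcOut]
      linarith [h1.1, h1.2]
    have hvP : c P = 0 := by
      apply c.zero_of_le_dist
      rw [Real.dist_eq]
      have habs : |P - x₀| = P - x₀ := abs_of_pos (by linarith [hx₀.2])
      rw [hcOut, habs]
      linarith
    have hint0 : (∫ x in a..P, f x * c x) = 0 := h c c.contDiff hvnear hvP
    have hvnn : ∀ x : ℝ, 0 ≤ c x := fun x => c.nonneg
    have hcomp : ∀ x ∈ Set.Icc a P, (f x₀) ^ 2 / 2 * c x ≤ f x₀ * (f x * c x) := by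
      intro x hx
      by_cases hxb : dist x x₀ < r
      · have h1 : |f x - f x₀| < |f x₀| / 2 := by
          have := hδ (lt_of_lt_of_le hxb hrδ)
          rwa [Real.dist_eq] at this
        have h2 : (f x₀) ^ 2 / 2 ≤ f x₀ * f x := by
          have h3 := abs_lt.mp h1
          have h4 := le_abs_self (f x₀)
          have h5 := neg_abs_le (f x₀)
          nlinarith [sq_abs (f x₀),
            mul_nonneg (by linarith : (0:ℝ) ≤ |f x₀| / 2 - (f x - f x₀))
              (by linarith : (0:ℝ) ≤ |f x₀| - f x₀),
            mul_nonneg (by linarith : (0:ℝ) ≤ |f x₀| / 2 + (f x - f x₀))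
              (by linarith : (0:ℝ) ≤ |f x₀| + f x₀)]
        calc (f x₀) ^ 2 / 2 * c x ≤ (f x₀ * f x) * c x :=
              mul_le_mul_of_nonneg_right h2 (hvnn x)
          _ = f x₀ * (f x * c x) := by ring
      · have hz : c x = 0 := c.zero_of_le_dist (hcOut.symm ▸ not_lt.mp hxb)
        rw [hz]
        simp
    have hint1 : IntervalIntegrable (fun x => (f x₀) ^ 2 / 2 * c x)
        MeasureTheory.volume a P :=
      (continuous_const.mul c.continuous).intervalIntegrable a P
    have hint2 : IntervalIntegrable (fun x => f x₀ * (f x * c x))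
        MeasureTheory.volume a P :=
      (continuousOn_const.mul (hfc.mul c.continuous.continuousOn)).intervalIntegrable_of_Icc haP
    have hmono := intervalIntegral.integral_mono_on haP hint1 hint2 hcomp
    rw [intervalIntegral.integral_const_mul, intervalIntegral.integral_const_mul,
      hint0, mul_zero] at hmono
    have hsupp : Function.support (⇑c) ⊆ Set.Ioc a P := by
      rw [c.support_eq, hcOut]
      intro y hy
      rw [Metric.mem_ball, Real.dist_eq] at hy
      have h1 := abs_lt.mp hy
      exact ⟨by linarith [h1.1], by linarith [h1.2]⟩
    have hIv : (∫ x in a..P, c x) = ∫ x, c x :=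
      intervalIntegral.integral_eq_integral_of_support_subset hsupp
    have hIvpos : 0 < ∫ x in a..P, c x := by
      rw [hIv]; exact c.integral_pos
    have hfsq : 0 < (f x₀) ^ 2 :=
      lt_of_le_of_ne (sq_nonneg _) (Ne.symm (pow_ne_zero 2 hne))
    have hpos : 0 < (f x₀) ^ 2 / 2 * ∫ x in a..P, c x :=
      mul_pos (by linarith) hIvpos
    linarith
  intro x hx
  have hxcl : x ∈ closure (Set.Ioo a P) := by
    rwa [closure_Ioo (ne_of_lt ha)]
  have hcw : ContinuousWithinAt f (Set.Ioo a P) x := (hfc x hx).mono Set.Ioo_subset_Icc_self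
  have himg := hcw.mem_closure_image hxcl
  have hsub : f '' (Set.Ioo a P) ⊆ {0} := by
    rintro y ⟨z, hz, rfl⟩
    exact hioo z hz
  have hcl := closure_mono hsub
  rw [closure_singleton] at hcl
  exact hcl himg

set_option maxHeartbeats 1000000 in
/-- Weak formulation of the "Robin" Regge–Wheeler eigenvalue
problem: the classical formulation is equivalent to the variational identity for
all smooth test functions vanishing near `a`. -/
theorem statement15
    (M k a : ℝ) (hM : 0 < M) (hk : 0 < k) (ha : a < Real.pi / 2)
    (ρ W V : ℝ → ℝ)
    (hρa : ρ a = 3 * M)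
    (hρge : ∀ x ∈ Set.Ico a (Real.pi / 2), 3 * M ≤ ρ x)
    (hρd : ∀ x ∈ Set.Ico a (Real.pi / 2),
      HasDerivWithinAt ρ (Del M k (ρ x) / (ρ x) ^ 2) (Set.Ico a (Real.pi / 2)) x)
    (hρtop : Tendsto ρ (𝓝[<] (Real.pi / 2)) atTop)
    (hW : ∀ x ∈ Set.Ico a (Real.pi / 2), W x = Del M k (ρ x) / (ρ x) ^ 4)
    (hWend : W (Real.pi / 2) = k ^ 2)
    (hWcont : ContinuousOn W (Set.Icc a (Real.pi / 2)))
    (ℓ : ℕ) (hℓ : 2 ≤ ℓ) (ω : ℝ)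
    (hV : ∀ x ∈ Set.Ico a (Real.pi / 2),
      V x = W x * ((ℓ : ℝ) * ((ℓ : ℝ) + 1) - 6 * M / ρ x))
    (hVend : V (Real.pi / 2) = k ^ 2 * ((ℓ : ℝ) * ((ℓ : ℝ) + 1)))
    (hVcont : ContinuousOn V (Set.Icc a (Real.pi / 2)))
    (R R' R'' : ℝ → ℝ)
    (hR1 : ∀ x ∈ Set.Icc a (Real.pi / 2),
      HasDerivWithinAt R (R' x) (Set.Icc a (Real.pi / 2)) x)
    (hR2 : ∀ x ∈ Set.Icc a (Real.pi / 2),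
      HasDerivWithinAt R' (R'' x) (Set.Icc a (Real.pi / 2)) x)
    (hR2c : ContinuousOn R'' (Set.Icc a (Real.pi / 2)))
    (hRa : R a = 0) :
    -- (I)
    ((∀ x ∈ Set.Icc a (Real.pi / 2), -R'' x + V x * R x = ω ^ 2 * R x)
      ∧ (-2 * ω ^ 2 * R (Real.pi / 2)
          + ((ℓ : ℝ) * ((ℓ : ℝ) + 1) * ((ℓ : ℝ) * ((ℓ : ℝ) + 1) - 2) / (6 * M)) *
              R' (Real.pi / 2)
          + k ^ 2 * ((ℓ : ℝ) * ((ℓ : ℝ) + 1)) * R (Real.pi / 2) = 0))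
    ↔
    -- (II)
    (∀ v : ℝ → ℝ, ContDiff ℝ (⊤ : ℕ∞) v → (∀ᶠ x in 𝓝 a, v x = 0) →
      (∫ x in a..(Real.pi / 2), (R' x * deriv v x + V x * R x * v x))
        + (6 * M * k ^ 2 / ((ℓ : ℝ) * ((ℓ : ℝ) + 1) - 2)) *
            (∫ x in a..(Real.pi / 2), (R' x * v x + R x * deriv v x))
      = ω ^ 2 *
          ((∫ x in a..(Real.pi / 2), R x * v x)
            + (12 * M / ((ℓ : ℝ) * ((ℓ : ℝ) + 1) * ((ℓ : ℝ) * ((ℓ : ℝ) + 1) - 2))) *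
                (∫ x in a..(Real.pi / 2), (R' x * v x + R x * deriv v x)))) := by
  set P := Real.pi / 2 with hPdef
  set lam := (ℓ : ℝ) * ((ℓ : ℝ) + 1) with hlamdef
  have hl2 : (2:ℝ) ≤ (ℓ : ℝ) := by exact_mod_cast hℓ
  have hlampos : (0:ℝ) < lam := by rw [hlamdef]; nlinarith
  have hlam6 : (6:ℝ) ≤ lam := by rw [hlamdef]; nlinarith
  clear_value lam
  have hlam0 : lam ≠ 0 := ne_of_gt hlampos
  have hlam2 : lam - 2 ≠ 0 := ne_of_gt (by linarith)
  have hM0 : M ≠ 0 := ne_of_gt hM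
  have haP : a ≤ P := ha.le
  have hIcc : uIcc a P = Icc a P := uIcc_of_le haP
  have hRc : ContinuousOn R (Icc a P) := fun x hx => (hR1 x hx).continuousWithinAt
  have hR'c : ContinuousOn R' (Icc a P) := fun x hx => (hR2 x hx).continuousWithinAt
  set f : ℝ → ℝ := fun x => -R'' x + V x * R x - ω ^ 2 * R x with hfdef
  have hfc : ContinuousOn f (Icc a P) :=
    ((hR2c.neg).add (hVcont.mul hRc)).sub (continuousOn_const.mul hRc)
  clear_value f
  set B : ℝ := R' P + 6 * M * k ^ 2 / (lam - 2) * R P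
      - ω ^ 2 * (12 * M / (lam * (lam - 2))) * R P with hBdef
  clear_value B
  have hfactor : -2 * ω ^ 2 * R P + lam * (lam - 2) / (6 * M) * R' P + k ^ 2 * lam * R P
      = (lam * (lam - 2) / (6 * M)) *
        (R' P + 6 * M * k ^ 2 / (lam - 2) * R P
          - ω ^ 2 * (12 * M / (lam * (lam - 2))) * R P) := by
    field_simp
    ring
  have hcoef : lam * (lam - 2) / (6 * M) ≠ 0 :=
    div_ne_zero (mul_ne_zero hlam0 hlam2) (by positivity)
  have key : ∀ v : ℝ → ℝ, ContDiff ℝ (⊤ : ℕ∞) v → v a = 0 →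
      (((∫ x in a..P, (R' x * deriv v x + V x * R x * v x))
          + 6 * M * k ^ 2 / (lam - 2) * (∫ x in a..P, (R' x * v x + R x * deriv v x))
        = ω ^ 2 * ((∫ x in a..P, R x * v x)
              + 12 * M / (lam * (lam - 2)) * (∫ x in a..P, (R' x * v x + R x * deriv v x))))
       ↔ ((∫ x in a..P, f x * v x) + B * v P = 0)) := by
    intro v hv hva
    have hvc : Continuous v := hv.continuous
    have hdvc : Continuous (deriv v) := hv.continuous_deriv (by exact_mod_cast le_top)
    have hvd : ∀ x : ℝ, HasDerivAt v (deriv v x) x :=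
      fun x => (hv.differentiable (by simp) x).hasDerivAt
    have iR'' : IntervalIntegrable (fun x => R'' x * v x) MeasureTheory.volume a P :=
      (hR2c.mul hvc.continuousOn).intervalIntegrable_of_Icc haP
    have iR'dv : IntervalIntegrable (fun x => R' x * deriv v x) MeasureTheory.volume a P :=
      (hR'c.mul hdvc.continuousOn).intervalIntegrable_of_Icc haP
    have iVR : IntervalIntegrable (fun x => V x * R x * v x) MeasureTheory.volume a P :=
      ((hVcont.mul hRc).mul hvc.continuousOn).intervalIntegrable_of_Icc haP
    have iRv : IntervalIntegrable (fun x => R x * v x) MeasureTheory.volume a P :=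
      (hRc.mul hvc.continuousOn).intervalIntegrable_of_Icc haP
    have iRv' : IntervalIntegrable (fun x => R x * deriv v x) MeasureTheory.volume a P :=
      (hRc.mul hdvc.continuousOn).intervalIntegrable_of_Icc haP
    have iR'v : IntervalIntegrable (fun x => R' x * v x) MeasureTheory.volume a P :=
      (hR'c.mul hvc.continuousOn).intervalIntegrable_of_Icc haP
    have E2 : (∫ x in a..P, (R' x * v x + R x * deriv v x)) = R P * v P := by
      have := intervalIntegral.integral_eq_sub_of_hasDeriv_right_of_le haP
        (f := fun x => R x * v x) (f' := fun x => R' x * v x + R x * deriv v x)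
        (hRc.mul hvc.continuousOn)
        (fun x hx => (((hR1 x (Set.Ioo_subset_Icc_self hx)).hasDerivAt
          (Icc_mem_nhds hx.1 hx.2)).mul (hvd x)).hasDerivWithinAt)
        (iR'v.add iRv')
      simpa [hRa] using this
    have E1 : (∫ x in a..P, (R'' x * v x + R' x * deriv v x)) = R' P * v P := by
      have := intervalIntegral.integral_eq_sub_of_hasDeriv_right_of_le haP
        (f := fun x => R' x * v x) (f' := fun x => R'' x * v x + R' x * deriv v x)
        (hR'c.mul hvc.continuousOn)
        (fun x hx => (((hR2 x (Set.Ioo_subset_Icc_self hx)).hasDerivAt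
          (Icc_mem_nhds hx.1 hx.2)).mul (hvd x)).hasDerivWithinAt)
        (iR''.add iR'dv)
      simpa [hva] using this
    have E1' : (∫ x in a..P, R'' x * v x) + (∫ x in a..P, R' x * deriv v x) = R' P * v P := by
      rw [← intervalIntegral.integral_add iR'' iR'dv]; exact E1
    have hsplit : (∫ x in a..P, (R' x * deriv v x + V x * R x * v x))
        = (∫ x in a..P, R' x * deriv v x) + (∫ x in a..P, V x * R x * v x) :=
      intervalIntegral.integral_add iR'dv iVR
    have hfv : (∫ x in a..P, f x * v x)
        = -(∫ x in a..P, R'' x * v x) + (∫ x in a..P, V x * R x * v x)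
          - ω ^ 2 * (∫ x in a..P, R x * v x) := by
      have hcongr : Set.EqOn (fun x => f x * v x)
          (fun x => -(R'' x * v x) + V x * R x * v x - ω ^ 2 * (R x * v x)) (uIcc a P) := by
        intro x _
        simp only [hfdef]
        ring
      have iNeg : IntervalIntegrable (fun x => -(R'' x * v x)) MeasureTheory.volume a P :=
        iR''.neg
      have iMul : IntervalIntegrable (fun x => ω ^ 2 * (R x * v x)) MeasureTheory.volume a P :=
        iRv.const_mul _
      have iNA : IntervalIntegrable (fun x => -(R'' x * v x) + V x * R x * v x)
          MeasureTheory.volume a P := iNeg.add iVR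
      rw [intervalIntegral.integral_congr hcongr,
        intervalIntegral.integral_sub iNA iMul,
        intervalIntegral.integral_add iNeg iVR, intervalIntegral.integral_neg,
        intervalIntegral.integral_const_mul]
    rw [hsplit, E2, hfv]
    constructor
    · intro h
      linear_combination h - E1' + v P * hBdef
    · intro h
      linear_combination h + E1' - v P * hBdef
  constructor
  · rintro ⟨hode, hrobin⟩ v hv hvnear
    have hva : v a = 0 := hvnear.self_of_nhds
    refine (key v hv hva).mpr ?_
    have hB0 : B = 0 := by
      rw [hfactor] at hrobin
      rcases mul_eq_zero.mp hrobin with h | h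
      · exact absurd h hcoef
      · rw [hBdef]; exact h
    have hf0 : (∫ x in a..P, f x * v x) = 0 := by
      have heq : Set.EqOn (fun x => f x * v x) (fun _ => 0) (uIcc a P) := by
        intro x hx
        rw [hIcc] at hx
        have h1 : f x = 0 := by
          have := hode x hx
          simp only [hfdef]
          linarith
        simp [h1]
      rw [intervalIntegral.integral_congr heq, intervalIntegral.integral_zero]
    rw [hf0, hB0]
    ring
  · intro hweak
    have hf0 : ∀ x ∈ Icc a P, f x = 0 := by
      have hioo : ∀ x₀ ∈ Ioo a P, f x₀ = 0 := by
        intro x₀ hx₀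
        by_contra hne
        have hcf : ContinuousAt f x₀ := hfc.continuousAt (Icc_mem_nhds hx₀.1 hx₀.2)
        have hs2 : 0 < |f x₀| / 2 := by positivity
        obtain ⟨δ, hδpos, hδ⟩ := Metric.continuousAt_iff.mp hcf (|f x₀| / 2) hs2
        set r : ℝ := min δ (min ((x₀ - a) / 2) ((P - x₀) / 2)) with hrdef
        have hr0 : 0 < r :=
          lt_min hδpos (lt_min (by linarith [hx₀.1]) (by linarith [hx₀.2]))
        have hra : r ≤ (x₀ - a) / 2 := (min_le_right _ _).trans (min_le_left _ _)
        have hrP : r ≤ (P - x₀) / 2 := (min_le_right _ _).trans (min_le_right _ _)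
        have hrδ : r ≤ δ := min_le_left _ _
        obtain ⟨c, hcIn, hcOut⟩ : ∃ c : ContDiffBump x₀, c.rIn = r / 2 ∧ c.rOut = r :=
          ⟨⟨r / 2, r, by positivity, by linarith⟩, rfl, rfl⟩
        have hvnear : ∀ᶠ x in 𝓝 a, c x = 0 := by
          filter_upwards [Metric.ball_mem_nhds a
            (show (0:ℝ) < (x₀ - a) / 2 by linarith [hx₀.1])] with y hy
          apply c.zero_of_le_dist
          rw [Metric.mem_ball, Real.dist_eq] at hy
          rw [Real.dist_eq]
          have h1 := abs_lt.mp hy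
          have h2 : x₀ - y ≤ |y - x₀| := by
            rw [abs_sub_comm]; exact le_abs_self _
          rw [hcOut]
          linarith [h1.1, h1.2]
        have hvP : c P = 0 := by
          apply c.zero_of_le_dist
          rw [Real.dist_eq]
          have habs : |P - x₀| = P - x₀ := abs_of_pos (by linarith [hx₀.2])
          rw [hcOut, habs]
          linarith
        have hva : c a = 0 := hvnear.self_of_nhds
        have hkey := (key c c.contDiff hva).mp (hweak c c.contDiff hvnear)
        have hint0 : (∫ x in a..P, f x * c x) = 0 := by
          rw [hvP] at hkey
          simpa using hkey
        have hvnn : ∀ x : ℝ, 0 ≤ c x := fun x => c.nonneg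
        have hcomp : ∀ x ∈ Icc a P, (f x₀) ^ 2 / 2 * c x ≤ f x₀ * (f x * c x) := by
          intro x hx
          by_cases hxb : dist x x₀ < r
          · have h1 : |f x - f x₀| < |f x₀| / 2 := by
              have := hδ (lt_of_lt_of_le hxb hrδ)
              rwa [Real.dist_eq] at this
            have h2 : (f x₀) ^ 2 / 2 ≤ f x₀ * f x := by
              have h3 := abs_lt.mp h1
              have h4 := le_abs_self (f x₀)
              have h5 := neg_abs_le (f x₀)
              nlinarith [sq_abs (f x₀),
                mul_nonneg (by linarith : (0:ℝ) ≤ |f x₀| / 2 - (f x - f x₀))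
                  (by linarith : (0:ℝ) ≤ |f x₀| - f x₀),
                mul_nonneg (by linarith : (0:ℝ) ≤ |f x₀| / 2 + (f x - f x₀))
                  (by linarith : (0:ℝ) ≤ |f x₀| + f x₀)]
            calc (f x₀) ^ 2 / 2 * c x ≤ (f x₀ * f x) * c x :=
                  mul_le_mul_of_nonneg_right h2 (hvnn x)
              _ = f x₀ * (f x * c x) := by ring
          · have hz : c x = 0 := c.zero_of_le_dist (hcOut.symm ▸ not_lt.mp hxb)
            rw [hz]
            simp
        have hint1 : IntervalIntegrable (fun x => (f x₀) ^ 2 / 2 * c x)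
            MeasureTheory.volume a P :=
          (continuous_const.mul c.continuous).intervalIntegrable a P
        have hint2 : IntervalIntegrable (fun x => f x₀ * (f x * c x))
            MeasureTheory.volume a P :=
          (continuousOn_const.mul (hfc.mul c.continuous.continuousOn)).intervalIntegrable_of_Icc haP
        have hmono := intervalIntegral.integral_mono_on haP hint1 hint2 hcomp
        rw [intervalIntegral.integral_const_mul, intervalIntegral.integral_const_mul,
          hint0, mul_zero] at hmono
        have hsupp : Function.support (⇑c) ⊆ Ioc a P := by
          rw [c.support_eq, hcOut]
          intro y hy
          rw [Metric.mem_ball, Real.dist_eq] at hy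
          have h1 := abs_lt.mp hy
          exact ⟨by linarith [h1.1], by linarith [h1.2]⟩
        have hIv : (∫ x in a..P, c x) = ∫ x, c x := by
          exact intervalIntegral.integral_eq_integral_of_support_subset hsupp
        have hIvpos : 0 < ∫ x in a..P, c x := by
          rw [hIv]; exact c.integral_pos
        have hfsq : 0 < (f x₀) ^ 2 :=
          lt_of_le_of_ne (sq_nonneg _) (Ne.symm (pow_ne_zero 2 hne))
        have hpos : 0 < (f x₀) ^ 2 / 2 * ∫ x in a..P, c x :=
          mul_pos (by linarith) hIvpos
        linarith
      intro x hx
      have hxcl : x ∈ closure (Ioo a P) := by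
        rwa [closure_Ioo (ne_of_lt ha)]
      have hcw : ContinuousWithinAt f (Ioo a P) x := (hfc x hx).mono Set.Ioo_subset_Icc_self
      have himg := hcw.mem_closure_image hxcl
      have hsub : f '' (Ioo a P) ⊆ {0} := by
        rintro y ⟨z, hz, rfl⟩
        exact hioo z hz
      have hcl := closure_mono hsub
      rw [closure_singleton] at hcl
      exact hcl himg
    have hPa4 : (0:ℝ) < (P - a) / 4 := by linarith
    obtain ⟨c2, hc2In, hc2Out⟩ :
        ∃ c2 : ContDiffBump P, c2.rIn = (P - a) / 4 ∧ c2.rOut = (P - a) / 2 :=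
      ⟨⟨(P - a) / 4, (P - a) / 2, by linarith, by linarith⟩, rfl, rfl⟩
    have hvnear2 : ∀ᶠ x in 𝓝 a, c2 x = 0 := by
      filter_upwards [Metric.ball_mem_nhds a (show (0:ℝ) < (P - a) / 2 by linarith)] with y hy
      apply c2.zero_of_le_dist
      rw [Metric.mem_ball, Real.dist_eq] at hy
      rw [Real.dist_eq]
      have h1 := abs_lt.mp hy
      have h2 : P - y ≤ |y - P| := by
        rw [abs_sub_comm]; exact le_abs_self _
      rw [hc2Out]
      linarith [h1.1, h1.2]
    have hva2 : c2 a = 0 := hvnear2.self_of_nhds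
    have hkey2 := (key c2 c2.contDiff hva2).mp (hweak c2 c2.contDiff hvnear2)
    have hv2P : c2 P = 1 :=
      c2.one_of_mem_closedBall (Metric.mem_closedBall_self (by rw [hc2In]; linarith))
    have hint02 : (∫ x in a..P, f x * c2 x) = 0 := by
      have heq : Set.EqOn (fun x => f x * c2 x) (fun _ => 0) (uIcc a P) := by
        intro x hx
        rw [hIcc] at hx
        simp [hf0 x hx]
      rw [intervalIntegral.integral_congr heq, intervalIntegral.integral_zero]
    have hB0 : B = 0 := by
      rw [hint02, hv2P] at hkey2
      linarith
    constructor
    · intro x hx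
      have h1 := hf0 x hx
      simp only [hfdef] at h1
      linarith
    · rw [hBdef] at hB0
      rw [hfactor, hB0, mul_zero]


end RWradial
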